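/- For the unweighted 1-D fused lasso (all weights equal to 1) with input y ∈ ℝⁿ, the solution path γ ↦ x*(γ) has at most n distinct linear segments. -/

import Mathlib

open Finset

/-- Objective of the (unweighted) 1-D fused lasso on an input of size `n+1`. -/
noncomputable def fusedObj1 (n : ℕ) (y : Fin (n + 1) → ℝ) (γ : ℝ)
    (x : Fin (n + 1) → ℝ) : ℝ :=
  (1 / 2) * ∑ t, (x t - y t) ^ 2 + γ * ∑ t : Fin n, |x t.succ - x t.castSucc|

namespace FL

/-- squared distance on the first `n+1` coordinates -/
noncomputable def Q (n : ℕ) (x v : ℕ → ℝ) : ℝ := ∑ i ∈ range (n+1), (v i - x i)^2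

/-- total variation on the first `n+1` coordinates -/
noncomputable def TV (n : ℕ) (v : ℕ → ℝ) : ℝ := ∑ t ∈ range n, |v (t+1) - v t|

/-- fused lasso objective -/
noncomputable def Fo (n : ℕ) (y : ℕ → ℝ) (γ : ℝ) (v : ℕ → ℝ) : ℝ :=
  (1/2) * Q n y v + γ * TV n v

/-- prefix sums of the residual -/
noncomputable def S (y x : ℕ → ℝ) (t : ℕ) : ℝ := ∑ i ∈ range (t+1), (x i - y i)

def KKT (n : ℕ) (y : ℕ → ℝ) (γ : ℝ) (x : ℕ → ℝ) : Prop :=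
  S y x n = 0 ∧ ∀ t < n, |S y x t| ≤ γ ∧
    S y x t * (x (t+1) - x t) = γ * |x (t+1) - x t|

def IsMin (n : ℕ) (y : ℕ → ℝ) (γ : ℝ) (x : ℕ → ℝ) : Prop :=
  ∀ v, Fo n y γ x ≤ Fo n y γ v

lemma TV_nonneg (n : ℕ) (v : ℕ → ℝ) : 0 ≤ TV n v :=
  Finset.sum_nonneg fun _ _ => abs_nonneg _

lemma Q_nonneg (n : ℕ) (x v : ℕ → ℝ) : 0 ≤ Q n x v :=
  Finset.sum_nonneg fun _ _ => sq_nonneg _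

/-- Abel summation -/
lemma abel (g w : ℕ → ℝ) (m : ℕ) :
    ∑ i ∈ range (m+1), g i * w i
      = (∑ t ∈ range m, (∑ i ∈ range (t+1), g i) * (w t - w (t+1)))
        + (∑ i ∈ range (m+1), g i) * w m := by
  induction m with
  | zero => simp
  | succ m ih =>
    rw [sum_range_succ (fun i => g i * w i), ih,
      sum_range_succ (fun t => (∑ i ∈ range (t + 1), g i) * (w t - w (t + 1))) m,
      sum_range_succ g (m+1), sum_range_succ g m]
    ring

theorem kkt_sufficient {n : ℕ} {y x : ℕ → ℝ} {γ : ℝ} (h : KKT n y γ x) (v : ℕ → ℝ) :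
    Fo n y γ x + (1/2) * Q n x v ≤ Fo n y γ v := by
  have hQ : Q n y v = Q n y x + Q n x v
      + 2 * ∑ i ∈ range (n+1), (x i - y i) * (v i - x i) := by
    unfold Q
    rw [mul_sum, ← sum_add_distrib, ← sum_add_distrib]
    exact Finset.sum_congr rfl fun i _ => by ring
  have hAbel := abel (fun i => x i - y i) (fun i => v i - x i) n
  have hSn : (∑ i ∈ range (n+1), (x i - y i)) = 0 := h.1
  rw [hSn, zero_mul, add_zero] at hAbel
  have key : ∀ t ∈ range n,
      0 ≤ (∑ i ∈ range (t+1), (x i - y i)) * ((v t - x t) - (v (t+1) - x (t+1)))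
          + γ * (|v (t+1) - v t| - |x (t+1) - x t|) := by
    intro t ht
    rw [mem_range] at ht
    obtain ⟨hb, hp⟩ := h.2 t ht
    have hS : (∑ i ∈ range (t+1), (x i - y i)) = S y x t := rfl
    rw [hS]
    have h1 : S y x t * (v (t+1) - v t) ≤ γ * |v (t+1) - v t| := by
      calc S y x t * (v (t+1) - v t) ≤ |S y x t * (v (t+1) - v t)| := le_abs_self _
        _ = |S y x t| * |v (t+1) - v t| := abs_mul _ _
        _ ≤ γ * |v (t+1) - v t| := by
            exact mul_le_mul_of_nonneg_right hb (abs_nonneg _)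
    nlinarith [hp]
  have hsum : 0 ≤ ∑ t ∈ range n,
      ((∑ i ∈ range (t+1), (x i - y i)) * ((v t - x t) - (v (t+1) - x (t+1)))
        + γ * (|v (t+1) - v t| - |x (t+1) - x t|)) := Finset.sum_nonneg key
  rw [sum_add_distrib] at hsum
  have hTV : ∑ t ∈ range n, γ * (|v (t+1) - v t| - |x (t+1) - x t|)
      = γ * (TV n v - TV n x) := by
    unfold TV
    rw [← mul_sum, sum_sub_distrib]
  have hA : ∑ t ∈ range n,
      (∑ i ∈ range (t+1), (x i - y i)) * ((v t - x t) - (v (t+1) - x (t+1)))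
      = ∑ i ∈ range (n+1), (x i - y i) * (v i - x i) := by
    rw [hAbel]
  rw [hTV, hA] at hsum
  unfold Fo
  nlinarith [hQ, hsum]

lemma kkt_isMin {n : ℕ} {y x : ℕ → ℝ} {γ : ℝ} (h : KKT n y γ x) : IsMin n y γ x := by
  intro v
  have := kkt_sufficient h v
  have h2 := Q_nonneg n x v
  linarith

lemma aux_eq {A C B : ℝ} (hC : 0 ≤ C) (hB : 0 < B)
    (h : ∀ ε : ℝ, |ε| < B → 0 ≤ ε * A + ε^2 * C) : A = 0 := by
  by_contra hA
  have hA2 : 0 < |A| := abs_pos.mpr hA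
  set r : ℝ := min ((2*C+1)⁻¹) (B / (2*|A|)) with hr
  have hr0 : 0 < r := lt_min (by positivity) (by positivity)
  have h1 : r ≤ (2*C+1)⁻¹ := min_le_left _ _
  have h2 : r ≤ B/(2*|A|) := min_le_right _ _
  have hεB : |(-A * r)| < B := by
    rw [abs_mul, abs_neg, abs_of_pos hr0]
    calc |A| * r ≤ |A| * (B/(2*|A|)) := by
          exact mul_le_mul_of_nonneg_left h2 (abs_nonneg _)
      _ = B/2 := by field_simp
      _ < B := by linarith
  have hε := h (-A * r) hεB
  have hrC : r * C < 1 := by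
    have : r * C ≤ (2*C+1)⁻¹ * C := mul_le_mul_of_nonneg_right h1 hC
    have h3 : (2*C+1)⁻¹ * C < 1 := by
      rw [inv_mul_lt_iff₀ (by positivity)]
      linarith
    linarith
  have hexp : (-A * r) * A + (-A * r)^2 * C = A^2 * r * (r * C - 1) := by ring
  rw [hexp] at hε
  have hA2' : 0 < A^2 := by positivity
  have hneg : A^2 * r * (r * C - 1) < 0 :=
    mul_neg_of_pos_of_neg (mul_pos hA2' hr0) (by linarith)
  linarith

lemma aux_nonpos {D C : ℝ} (hC : 0 ≤ C) (h : ∀ ε : ℝ, ε < 0 → 0 ≤ ε * D + ε^2 * C) :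
    D ≤ 0 := by
  by_contra hD
  push_neg at hD
  have hε := h (-(D/(2*C+1))) (by simp only [neg_neg, neg_lt_zero]; positivity)
  have hexp : (-(D/(2*C+1))) * D + (-(D/(2*C+1)))^2 * C
      = -(D^2*(C+1))/(2*C+1)^2 := by
    field_simp
    ring
  rw [hexp] at hε
  have : 0 < D^2*(C+1) := by positivity
  have h2 : (0:ℝ) < (2*C+1)^2 := by positivity
  rw [le_div_iff₀ h2] at hε
  nlinarith

lemma aux_abs_le {A C γ : ℝ} (hC : 0 ≤ C)
    (h : ∀ ε : ℝ, 0 ≤ ε * A + ε^2 * C + γ * |ε|) : |A| ≤ γ := by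
  rw [abs_le]
  constructor
  · have := aux_nonpos (D := -(A+γ)) hC (fun ε hε => by
      have h2 := h (-ε)
      have h4 : 0 ≤ (-ε) * A + (-ε)^2 * C + γ * (-ε) := by
        simpa [abs_of_pos (show (0:ℝ) < -ε by linarith)] using h2
      nlinarith)
    linarith
  · have := aux_nonpos (D := A - γ) hC (fun ε hε => by
      have h2 := h ε
      have h4 : 0 ≤ ε * A + ε^2 * C + γ * (-ε) := by
        simpa [abs_of_neg hε] using h2
      nlinarith)
    linarith

lemma filter_le_range (n t : ℕ) (ht : t ≤ n) :
    (range (n+1)).filter (fun i => i ≤ t) = range (t+1) := by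
  ext i
  simp only [mem_filter, mem_range]
  omega

lemma sum_ind (n t : ℕ) (ht : t ≤ n) (g : ℕ → ℝ) :
    ∑ i ∈ range (n+1), (if i ≤ t then (1:ℝ) else 0) * g i
      = ∑ i ∈ range (t+1), g i := by
  have : ∀ i ∈ range (n+1), (if i ≤ t then (1:ℝ) else 0) * g i
      = if i ≤ t then g i else 0 := by
    intro i _
    split <;> simp
  rw [Finset.sum_congr rfl this, ← Finset.sum_filter, filter_le_range n t ht]

lemma sum_ind_one (n t : ℕ) (ht : t ≤ n) :
    ∑ i ∈ range (n+1), (if i ≤ t then (1:ℝ) else 0) = ((t:ℝ)+1) := by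
  rw [Finset.sum_boole, filter_le_range n t ht, Finset.card_range]
  push_cast
  ring

lemma pert (n : ℕ) (y x v : ℕ → ℝ) (γ ε : ℝ) (t : ℕ) (ht : t < n)
    (hv : ∀ i, v i = x i + ε * (if i ≤ t then 1 else 0)) :
    Fo n y γ v = Fo n y γ x + ε * S y x t + ε^2 * (((t:ℝ)+1)/2)
      + γ * (|x (t+1) - x t - ε| - |x (t+1) - x t|) := by
  have htn : t ≤ n := le_of_lt ht
  have hQ : Q n y v = Q n y x + 2*ε*(S y x t) + ε^2*((t:ℝ)+1) := by
    unfold Q S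
    have hterm : ∀ i ∈ range (n+1),
        (v i - y i)^2
          = (x i - y i)^2 + (2*ε) * ((if i ≤ t then (1:ℝ) else 0) * (x i - y i))
            + ε^2 * (if i ≤ t then (1:ℝ) else 0) := by
      intro i _
      rw [hv i]
      split <;> ring
    rw [Finset.sum_congr rfl hterm, sum_add_distrib, sum_add_distrib, ← mul_sum, ← mul_sum,
      sum_ind n t htn, sum_ind_one n t htn]
  have hTV : TV n v = TV n x + (|x (t+1) - x t - ε| - |x (t+1) - x t|) := by
    unfold TV
    rw [← Finset.add_sum_erase _ _ (mem_range.mpr ht),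
        ← Finset.add_sum_erase _ (fun s => |x (s+1) - x s|) (mem_range.mpr ht)]
    have h1 : ∑ s ∈ (range n).erase t, |v (s+1) - v s|
        = ∑ s ∈ (range n).erase t, |x (s+1) - x s| := by
      refine Finset.sum_congr rfl fun s hs => ?_
      have hst : s ≠ t := (Finset.mem_erase.mp hs).1
      rw [hv (s+1), hv s]
      have he : (if s+1 ≤ t then (1:ℝ) else 0) = (if s ≤ t then (1:ℝ) else 0) := by
        rcases lt_trichotomy s t with h | h | h
        · rw [if_pos (by omega), if_pos (by omega)]
        · exact absurd h hst
        · rw [if_neg (by omega), if_neg (by omega)]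
      rw [he]
      congr 1
      ring
    have h2 : |v (t+1) - v t| = |x (t+1) - x t - ε| := by
      rw [hv (t+1), hv t, if_neg (by omega), if_pos (le_refl t)]
      congr 1
      ring
    rw [h1, h2]
    ring
  unfold Fo
  rw [hQ, hTV]
  ring

lemma pert_const (n : ℕ) (y x v : ℕ → ℝ) (γ ε : ℝ) (hv : ∀ i, v i = x i + ε) :
    Fo n y γ v = Fo n y γ x + ε * S y x n + ε^2*(((n:ℝ)+1)/2) := by
  have hQ : Q n y v = Q n y x + 2*ε*(S y x n) + ε^2*((n:ℝ)+1) := by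
    unfold Q S
    have hterm : ∀ i ∈ range (n+1),
        (v i - y i)^2 = (x i - y i)^2 + (2*ε) * (x i - y i) + ε^2 := by
      intro i _
      rw [hv i]
      ring
    rw [Finset.sum_congr rfl hterm, sum_add_distrib, sum_add_distrib, ← mul_sum,
      Finset.sum_const, Finset.card_range, nsmul_eq_mul]
    push_cast
    ring
  have hTV : TV n v = TV n x := by
    unfold TV
    refine Finset.sum_congr rfl fun s _ => ?_
    rw [hv (s+1), hv s]
    congr 1
    ring
  unfold Fo
  rw [hQ, hTV]
  ring

theorem isMin_kkt {n : ℕ} {y x : ℕ → ℝ} {γ : ℝ} (hγ : 0 ≤ γ) (hm : IsMin n y γ x) :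
    KKT n y γ x := by
  constructor
  · have hK : ∀ ε : ℝ, |ε| < 1 → 0 ≤ ε * S y x n + ε^2 * (((n:ℝ)+1)/2) := by
      intro ε _
      have h0 := hm (fun i => x i + ε)
      rw [pert_const n y x _ γ ε (fun i => rfl)] at h0
      linarith
    exact aux_eq (by positivity) one_pos hK
  · intro t ht
    have hK : ∀ ε : ℝ, 0 ≤ ε * S y x t + ε^2 * (((t:ℝ)+1)/2)
        + γ * (|x (t+1) - x t - ε| - |x (t+1) - x t|) := by
      intro ε
      have h0 := hm (fun i => x i + ε * (if i ≤ t then 1 else 0))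
      rw [pert n y x _ γ ε t ht (fun i => rfl)] at h0
      linarith
    set d := x (t+1) - x t with hd
    rcases lt_trichotomy d 0 with hdn | hd0 | hdp
    · have hSeq : S y x t + γ = 0 := by
        apply aux_eq (A := S y x t + γ) (C := ((t:ℝ)+1)/2) (B := -d) (by positivity)
          (by linarith)
        intro ε hε
        have h1 := hK ε
        have hde : d - ε < 0 := by
          rcases abs_lt.mp hε with ⟨h2, h3⟩
          linarith
        have h2 : |d - ε| = |d| + ε := by
          rw [abs_of_neg hdn, abs_of_neg hde]
          ring
        rw [h2] at h1
        nlinarith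
      have hS : S y x t = -γ := by linarith
      constructor
      · rw [hS, abs_neg, abs_of_nonneg hγ]
      · rw [hS, abs_of_neg hdn]
        ring
    · constructor
      · apply aux_abs_le (C := ((t:ℝ)+1)/2) (by positivity)
        intro ε
        have h1 := hK ε
        rw [hd0] at h1
        simpa using h1
      · rw [hd0]
        simp
    · have hSeq : S y x t - γ = 0 := by
        apply aux_eq (A := S y x t - γ) (C := ((t:ℝ)+1)/2) (B := d) (by positivity) hdp
        intro ε hε
        have h1 := hK ε
        have hde : 0 < d - ε := by
          rcases abs_lt.mp hε with ⟨h2, h3⟩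
          linarith
        have h2 : |d - ε| = |d| - ε := by
          rw [abs_of_pos hdp, abs_of_pos hde]
        rw [h2] at h1
        nlinarith
      have hS : S y x t = γ := by linarith
      constructor
      · rw [hS, abs_of_nonneg hγ]
      · rw [hS, abs_of_pos hdp]

theorem min_unique {n : ℕ} {y x x' : ℕ → ℝ} {γ : ℝ} (hγ : 0 ≤ γ)
    (h1 : IsMin n y γ x) (h2 : IsMin n y γ x') : ∀ i ≤ n, x i = x' i := by
  have hk := isMin_kkt hγ h1
  have hs := kkt_sufficient hk x'
  have h3 := h2 x
  have hQ0 : Q n x x' = 0 := le_antisymm (by linarith) (Q_nonneg n x x')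
  intro i hi
  have hz := (Finset.sum_eq_zero_iff_of_nonneg (fun j _ => sq_nonneg _)).mp hQ0 i
    (mem_range.mpr (by omega))
  have := pow_eq_zero_iff (n := 2) (by norm_num) |>.mp hz
  linarith [this]

lemma S_succ (y x : ℕ → ℝ) (t : ℕ) :
    S y x (t+1) = S y x t + (x (t+1) - y (t+1)) := sum_range_succ _ _

lemma S_zero (y x : ℕ → ℝ) : S y x 0 = x 0 - y 0 := by
  unfold S
  rw [sum_range_one]

lemma S_add (y x z : ℕ → ℝ) (t : ℕ) : S y z t = S y x t + S x z t := by
  unfold S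
  rw [← sum_add_distrib]
  exact Finset.sum_congr rfl fun i _ => by ring

lemma prod_pos_case {Sv d g : ℝ} (hp : Sv * d = g * |d|) (hd : 0 < d) : Sv = g := by
  rw [abs_of_pos hd] at hp
  exact mul_right_cancel₀ (ne_of_gt hd) hp

lemma prod_neg_case {Sv d g : ℝ} (hp : Sv * d = g * |d|) (hd : d < 0) : Sv = -g := by
  have h2 : Sv * d = (-g) * d := by
    rw [abs_of_neg hd] at hp
    rw [hp]
    ring
  exact mul_right_cancel₀ (ne_of_lt hd) h2

theorem mono_step {n : ℕ} {y x z : ℕ → ℝ} {γ δ : ℝ} (hγ : 0 ≤ γ) (hδ : 0 ≤ δ)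
    (hx : KKT n y γ x) (hz : KKT n x δ z) :
    KKT n y (γ+δ) z ∧ ∀ t, t < n → (0 < z (t+1) - z t → 0 < x (t+1) - x t)
      ∧ (z (t+1) - z t < 0 → x (t+1) - x t < 0) := by
  have hub : ∀ s, s < n → S x z s ≤ δ := fun s hs => (abs_le.mp (hz.2 s hs).1).2
  have hlb : ∀ s, s < n → -δ ≤ S x z s := fun s hs => (abs_le.mp (hz.2 s hs).1).1
  -- upper block structure
  have hzx_le : ∀ t, t < n → S x z t = δ →
      z (t+1) - x (t+1) ≤ 0 ∧ 0 ≤ z t - x t := by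
    intro t ht hVt
    have e : S x z (t+1) = S x z t + (z (t+1) - x (t+1)) := S_succ x z t
    constructor
    · rcases eq_or_lt_of_le (Nat.succ_le_of_lt ht) with h | h
      · have h' : t + 1 = n := h
        have h0 : S x z (t+1) = 0 := by rw [h']; exact hz.1
        linarith [e, hVt, h0]
      · have := hub (t+1) h
        linarith [e, hVt]
    · cases t with
      | zero =>
        have h0 : S x z 0 = z 0 - x 0 := S_zero x z
        linarith [hVt]
      | succ s =>
        have hs : s < n := by omega
        have := hub s hs
        have e2 : S x z (s+1) = S x z s + (z (s+1) - x (s+1)) := S_succ x z s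
        linarith [hVt]
  have hzx_ge : ∀ t, t < n → S x z t = -δ →
      0 ≤ z (t+1) - x (t+1) ∧ z t - x t ≤ 0 := by
    intro t ht hVt
    have e : S x z (t+1) = S x z t + (z (t+1) - x (t+1)) := S_succ x z t
    constructor
    · rcases eq_or_lt_of_le (Nat.succ_le_of_lt ht) with h | h
      · have h' : t + 1 = n := h
        have h0 : S x z (t+1) = 0 := by rw [h']; exact hz.1
        linarith [e, hVt, h0]
      · have := hlb (t+1) h
        linarith [e, hVt]
    · cases t with
      | zero =>
        have h0 : S x z 0 = z 0 - x 0 := S_zero x z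
        linarith [hVt]
      | succ s =>
        have hs : s < n := by omega
        have := hlb s hs
        have e2 : S x z (s+1) = S x z s + (z (s+1) - x (s+1)) := S_succ x z s
        linarith [hVt]
  have key : ∀ t, t < n →
      (0 < z (t+1) - z t → 0 < x (t+1) - x t ∧ S y x t = γ ∧ S x z t = δ)
      ∧ (z (t+1) - z t < 0 → x (t+1) - x t < 0 ∧ S y x t = -γ ∧ S x z t = -δ) := by
    intro t ht
    constructor
    · intro hdz
      have hV : S x z t = δ := prod_pos_case (hz.2 t ht).2 hdz
      obtain ⟨h1, h2⟩ := hzx_le t ht hV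
      have hdx : 0 < x (t+1) - x t := by linarith
      have hSx : S y x t = γ := prod_pos_case (hx.2 t ht).2 hdx
      exact ⟨hdx, hSx, hV⟩
    · intro hdz
      have hV : S x z t = -δ := prod_neg_case (hz.2 t ht).2 hdz
      obtain ⟨h1, h2⟩ := hzx_ge t ht hV
      have hdx : x (t+1) - x t < 0 := by linarith
      have hSx : S y x t = -γ := prod_neg_case (hx.2 t ht).2 hdx
      exact ⟨hdx, hSx, hV⟩
  refine ⟨⟨?_, ?_⟩, fun t ht => ⟨fun h => ((key t ht).1 h).1, fun h => ((key t ht).2 h).1⟩⟩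
  · rw [S_add y x z n, hx.1, hz.1]
    ring
  · intro t ht
    have hW : S y z t = S y x t + S x z t := S_add y x z t
    constructor
    · rw [hW]
      calc |S y x t + S x z t| ≤ |S y x t| + |S x z t| := abs_add_le _ _
        _ ≤ γ + δ := add_le_add (hx.2 t ht).1 (hz.2 t ht).1
    · rcases lt_trichotomy (z (t+1) - z t) 0 with h | h | h
      · obtain ⟨_, e1, e2⟩ := (key t ht).2 h
        rw [hW, e1, e2, abs_of_neg h]
        ring
      · rw [h]
        simp
      · obtain ⟨_, e1, e2⟩ := (key t ht).1 h
        rw [hW, e1, e2, abs_of_pos h]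

theorem interp {n : ℕ} {y x₁ x₂ : ℕ → ℝ} {γ₁ γ₂ γ l : ℝ}
    (h1 : KKT n y γ₁ x₁) (h2 : KKT n y γ₂ x₂) (hl0 : 0 ≤ l) (hl1 : l ≤ 1)
    (hγ : γ = (1-l)*γ₁ + l*γ₂)
    (hpat : ∀ t, t < n → ((0 < x₁ (t+1) - x₁ t ↔ 0 < x₂ (t+1) - x₂ t)
      ∧ (x₁ (t+1) - x₁ t < 0 ↔ x₂ (t+1) - x₂ t < 0)))
    (v : ℕ → ℝ) (hv : ∀ i, v i = (1-l) * x₁ i + l * x₂ i) :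
    KKT n y γ v := by
  have hS : ∀ t, S y v t = (1-l) * S y x₁ t + l * S y x₂ t := by
    intro t
    unfold S
    rw [mul_sum, mul_sum, ← sum_add_distrib]
    exact Finset.sum_congr rfl fun i _ => by rw [hv i]; ring
  constructor
  · rw [hS n, h1.1, h2.1]
    ring
  · intro t ht
    obtain ⟨hb1, hp1⟩ := h1.2 t ht
    obtain ⟨hb2, hp2⟩ := h2.2 t ht
    have hdv : v (t+1) - v t = (1-l) * (x₁ (t+1) - x₁ t) + l * (x₂ (t+1) - x₂ t) := by
      rw [hv (t+1), hv t]
      ring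
    constructor
    · rw [hS t, hγ]
      calc |(1-l) * S y x₁ t + l * S y x₂ t|
          ≤ |(1-l) * S y x₁ t| + |l * S y x₂ t| := abs_add_le _ _
        _ = (1-l) * |S y x₁ t| + l * |S y x₂ t| := by
            rw [abs_mul, abs_mul, abs_of_nonneg (by linarith : (0:ℝ) ≤ 1 - l),
              abs_of_nonneg hl0]
        _ ≤ (1-l) * γ₁ + l * γ₂ :=
            add_le_add (mul_le_mul_of_nonneg_left hb1 (by linarith))
              (mul_le_mul_of_nonneg_left hb2 hl0)
    · rcases lt_trichotomy (x₁ (t+1) - x₁ t) 0 with hc | hc | hc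
      · have hc2 : x₂ (t+1) - x₂ t < 0 := (hpat t ht).2.mp hc
        have hS1 : S y x₁ t = -γ₁ := prod_neg_case hp1 hc
        have hS2 : S y x₂ t = -γ₂ := prod_neg_case hp2 hc2
        have hdvn : v (t+1) - v t < 0 := by
          rcases lt_or_eq_of_le hl1 with hl | hl
          · have ha : (1-l) * (x₁ (t+1) - x₁ t) < 0 :=
              mul_neg_of_pos_of_neg (by linarith) hc
            have hb : l * (x₂ (t+1) - x₂ t) ≤ 0 :=
              mul_nonpos_of_nonneg_of_nonpos hl0 (le_of_lt hc2)
            linarith [hdv]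
          · rw [hdv, hl]
            simpa using hc2
        rw [hS t, hS1, hS2, abs_of_neg hdvn, hγ]
        ring
      · have hd2 : x₂ (t+1) - x₂ t = 0 := by
          rcases lt_trichotomy (x₂ (t+1) - x₂ t) 0 with h | h | h
          · exact absurd ((hpat t ht).2.mpr h) (by rw [hc]; exact lt_irrefl 0)
          · exact h
          · exact absurd ((hpat t ht).1.mpr h) (by rw [hc]; exact lt_irrefl 0)
        have hdv0 : v (t+1) - v t = 0 := by
          rw [hdv, hc, hd2]
          ring
        rw [hdv0]
        simp
      · have hc2 : 0 < x₂ (t+1) - x₂ t := (hpat t ht).1.mp hc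
        have hS1 : S y x₁ t = γ₁ := prod_pos_case hp1 hc
        have hS2 : S y x₂ t = γ₂ := prod_pos_case hp2 hc2
        have hdvp : 0 < v (t+1) - v t := by
          rcases lt_or_eq_of_le hl1 with hl | hl
          · have ha : 0 < (1-l) * (x₁ (t+1) - x₁ t) :=
              mul_pos (by linarith) hc
            have hb : 0 ≤ l * (x₂ (t+1) - x₂ t) :=
              mul_nonneg hl0 (le_of_lt hc2)
            linarith [hdv]
          · rw [hdv, hl]
            simpa using hc2
        rw [hS t, hS1, hS2, abs_of_pos hdvp, hγ]

lemma Fo_congr {n : ℕ} {y y' v v' : ℕ → ℝ} (γ : ℝ) (hy : ∀ i, i ≤ n → y i = y' i)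
    (hv : ∀ i, i ≤ n → v i = v' i) : Fo n y γ v = Fo n y' γ v' := by
  unfold Fo Q TV
  congr 1
  · congr 1
    apply Finset.sum_congr rfl
    intro i hi
    rw [mem_range] at hi
    rw [hy i (by omega), hv i (by omega)]
  · congr 1
    apply Finset.sum_congr rfl
    intro t ht
    rw [mem_range] at ht
    rw [hv (t+1) (by omega), hv t (by omega)]

noncomputable def toS (n : ℕ) (v : Fin (n+1) → ℝ) : ℕ → ℝ :=
  fun i => if h : i < n+1 then v ⟨i, h⟩ else 0

lemma toS_val {n : ℕ} (v : Fin (n+1) → ℝ) (i : ℕ) (h : i < n+1) :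
    toS n v i = v ⟨i, h⟩ := dif_pos h

lemma toS_fin {n : ℕ} (v : Fin (n+1) → ℝ) (t : Fin (n+1)) : toS n v t.val = v t := by
  rw [toS_val v t.val t.isLt, Fin.eta]

lemma toS_succ {n : ℕ} (v : Fin (n+1) → ℝ) (t : Fin n) :
    toS n v (t.val + 1) = v t.succ := by
  rw [toS_val v _ (by omega : t.val + 1 < n+1)]
  congr 1

lemma toS_castSucc {n : ℕ} (v : Fin (n+1) → ℝ) (t : Fin n) :
    toS n v t.val = v t.castSucc := by
  rw [toS_val v _ (by omega : t.val < n+1)]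
  congr 1

lemma fused_eq {n : ℕ} (y v : Fin (n+1) → ℝ) (γ : ℝ) :
    fusedObj1 n y γ v = Fo n (toS n y) γ (toS n v) := by
  unfold fusedObj1 Fo Q TV
  congr 1
  · congr 1
    rw [← Fin.sum_univ_eq_sum_range (fun i => (toS n v i - toS n y i)^2) (n+1)]
    apply Finset.sum_congr rfl
    intro t _
    rw [toS_fin v t, toS_fin y t]
  · congr 1
    rw [← Fin.sum_univ_eq_sum_range (fun s => |toS n v (s+1) - toS n v s|) n]
    apply Finset.sum_congr rfl
    intro t _
    rw [toS_succ v t, toS_castSucc v t]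

lemma fused_nonneg {n : ℕ} (y v : Fin (n+1) → ℝ) {γ : ℝ} (hγ : 0 ≤ γ) :
    0 ≤ fusedObj1 n y γ v :=
  add_nonneg
    (mul_nonneg (by norm_num) (Finset.sum_nonneg fun _ _ => sq_nonneg _))
    (mul_nonneg hγ (Finset.sum_nonneg fun _ _ => abs_nonneg _))

theorem exists_min_fin (n : ℕ) (y : Fin (n+1) → ℝ) (γ : ℝ) (hγ : 0 ≤ γ) :
    ∃ z : Fin (n+1) → ℝ, ∀ v, fusedObj1 n y γ z ≤ fusedObj1 n y γ v := by
  have hcont : Continuous (fusedObj1 n y γ) := by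
    unfold fusedObj1
    apply Continuous.add
    · exact continuous_const.mul (continuous_finset_sum _ fun t _ =>
        ((continuous_apply t).sub continuous_const).pow 2)
    · exact continuous_const.mul (continuous_finset_sum _ fun t _ =>
        ((continuous_apply t.succ).sub (continuous_apply t.castSucc)).abs)
  have hobj_y : 0 ≤ fusedObj1 n y γ y := fused_nonneg y y hγ
  set R : ℝ := Real.sqrt (2 * fusedObj1 n y γ y) + 1 with hR
  have hR0 : 0 ≤ R := by positivity
  obtain ⟨z, hzK, hzmin⟩ := (isCompact_closedBall y R).exists_isMinOn
    ⟨y, Metric.mem_closedBall_self hR0⟩ hcont.continuousOn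
  refine ⟨z, fun v => ?_⟩
  by_cases hv : v ∈ Metric.closedBall y R
  · exact hzmin hv
  · have h1 : fusedObj1 n y γ z ≤ fusedObj1 n y γ y :=
      hzmin (Metric.mem_closedBall_self hR0)
    have h2 : fusedObj1 n y γ y < fusedObj1 n y γ v := by
      rw [Metric.mem_closedBall, dist_pi_le_iff hR0] at hv
      push_neg at hv
      obtain ⟨i, hi⟩ := hv
      rw [Real.dist_eq] at hi
      have hsq : R^2 < (v i - y i)^2 := by
        have h3 := mul_self_lt_mul_self hR0 hi
        nlinarith [sq_abs (v i - y i)]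
      have hsum : (v i - y i)^2 ≤ ∑ t, (v t - y t)^2 :=
        Finset.single_le_sum (f := fun t : Fin (n+1) => (v t - y t)^2)
          (fun t _ => sq_nonneg _) (Finset.mem_univ i)
      have hF : (1/2) * (v i - y i)^2 ≤ fusedObj1 n y γ v := by
        unfold fusedObj1
        have htv : 0 ≤ γ * ∑ t : Fin n, |v t.succ - v t.castSucc| :=
          mul_nonneg hγ (Finset.sum_nonneg fun _ _ => abs_nonneg _)
        nlinarith [hsum]
      have hRF : 2 * fusedObj1 n y γ y ≤ R^2 := by
        have hs := Real.sq_sqrt (by linarith : (0:ℝ) ≤ 2 * fusedObj1 n y γ y)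
        have hsn := Real.sqrt_nonneg (2 * fusedObj1 n y γ y)
        nlinarith
      nlinarith
    linarith

theorem exists_min_nat (n : ℕ) (y' : ℕ → ℝ) (γ : ℝ) (hγ : 0 ≤ γ) :
    ∃ z : ℕ → ℝ, IsMin n y' γ z := by
  obtain ⟨zF, hzF⟩ := exists_min_fin n (fun t : Fin (n+1) => y' t.val) γ hγ
  refine ⟨toS n zF, fun v => ?_⟩
  have e1 : Fo n y' γ (toS n zF)
      = fusedObj1 n (fun t : Fin (n+1) => y' t.val) γ zF := by
    rw [fused_eq]
    exact Fo_congr γ (fun i hi =>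
      (toS_val (fun t : Fin (n+1) => y' t.val) i (by omega)).symm) (fun i hi => rfl)
  have e2 : Fo n y' γ v
      = fusedObj1 n (fun t : Fin (n+1) => y' t.val) γ (fun t : Fin (n+1) => v t.val) := by
    rw [fused_eq]
    exact Fo_congr γ (fun i hi =>
        (toS_val (fun t : Fin (n+1) => y' t.val) i (by omega)).symm)
      (fun i hi => (toS_val (fun t : Fin (n+1) => v t.val) i (by omega)).symm)
  rw [e1, e2]
  exact hzF _

open Classical in
noncomputable def Jf (n : ℕ) (X : ℝ → ℕ → ℝ) (γ : ℝ) : Finset ℕ :=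
  (range n).filter (fun t => X γ (t+1) ≠ X γ t)

noncomputable def Nn (n : ℕ) (X : ℝ → ℕ → ℝ) (γ : ℝ) : ℕ := (Jf n X γ).card

section Path

variable {n : ℕ} {Y : ℕ → ℝ} {X : ℝ → ℕ → ℝ}

theorem path_mono (hX : ∀ γ, 0 ≤ γ → IsMin n Y γ (X γ)) {γ γ' : ℝ}
    (hγ : 0 ≤ γ) (hle : γ ≤ γ') :
    ∀ t, t < n → (0 < X γ' (t+1) - X γ' t → 0 < X γ (t+1) - X γ t)
      ∧ (X γ' (t+1) - X γ' t < 0 → X γ (t+1) - X γ t < 0) := by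
  have hγ' : 0 ≤ γ' := le_trans hγ hle
  obtain ⟨z, hz⟩ := exists_min_nat n (X γ) (γ' - γ) (by linarith)
  have hzk : KKT n (X γ) (γ'-γ) z := isMin_kkt (by linarith) hz
  have hxk : KKT n Y γ (X γ) := isMin_kkt hγ (hX γ hγ)
  obtain ⟨hzK', hsign⟩ := mono_step hγ (by linarith) hxk hzk
  have heq : γ + (γ' - γ) = γ' := by ring
  rw [heq] at hzK'
  have hagree : ∀ i, i ≤ n → z i = X γ' i :=
    min_unique hγ' (kkt_isMin hzK') (hX γ' hγ')
  intro t ht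
  have e1 : z (t+1) = X γ' (t+1) := hagree (t+1) (by omega)
  have e2 : z t = X γ' t := hagree t (by omega)
  constructor
  · intro h
    rw [← e1, ← e2] at h
    exact (hsign t ht).1 h
  · intro h
    rw [← e1, ← e2] at h
    exact (hsign t ht).2 h

theorem path_jf_subset (hX : ∀ γ, 0 ≤ γ → IsMin n Y γ (X γ)) {γ γ' : ℝ}
    (hγ : 0 ≤ γ) (hle : γ ≤ γ') : Jf n X γ' ⊆ Jf n X γ := by
  intro t htm
  rw [Jf, mem_filter, mem_range] at htm
  obtain ⟨ht, hne⟩ := htm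
  rw [Jf, mem_filter, mem_range]
  refine ⟨ht, ?_⟩
  have hd : X γ' (t+1) - X γ' t ≠ 0 := sub_ne_zero.mpr hne
  rcases hd.lt_or_gt with h | h
  · have := (path_mono hX hγ hle t ht).2 h
    exact fun he => absurd (by rw [he]; ring : X γ (t+1) - X γ t = 0) (ne_of_lt this)
  · have := (path_mono hX hγ hle t ht).1 h
    exact fun he => absurd (by rw [he]; ring : X γ (t+1) - X γ t = 0) (ne_of_gt this)

theorem path_N_anti (hX : ∀ γ, 0 ≤ γ → IsMin n Y γ (X γ)) {γ γ' : ℝ}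
    (hγ : 0 ≤ γ) (hle : γ ≤ γ') : Nn n X γ' ≤ Nn n X γ :=
  Finset.card_le_card (path_jf_subset hX hγ hle)

theorem path_pat (hX : ∀ γ, 0 ≤ γ → IsMin n Y γ (X γ)) {γ γ' : ℝ}
    (hγ : 0 ≤ γ) (hle : γ ≤ γ') (hN : Nn n X γ' = Nn n X γ) :
    ∀ t, t < n → ((0 < X γ (t+1) - X γ t ↔ 0 < X γ' (t+1) - X γ' t)
      ∧ (X γ (t+1) - X γ t < 0 ↔ X γ' (t+1) - X γ' t < 0)) := by
  have hJ : Jf n X γ = Jf n X γ' :=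
    (Finset.eq_of_subset_of_card_le (path_jf_subset hX hγ hle) hN.ge).symm
  intro t ht
  have hm := path_mono hX hγ hle t ht
  have hmem : (X γ (t+1) ≠ X γ t) → (X γ' (t+1) ≠ X γ' t) := by
    intro h
    have h2 : t ∈ Jf n X γ := by
      rw [Jf, mem_filter, mem_range]
      exact ⟨ht, h⟩
    rw [hJ, Jf, mem_filter] at h2
    exact h2.2
  constructor
  · constructor
    · intro h
      have hne : X γ' (t+1) ≠ X γ' t := hmem (by
        intro he
        have : X γ (t+1) - X γ t = 0 := by rw [he]; ring
        linarith)
      rcases (sub_ne_zero.mpr hne).lt_or_gt with hlt | hgt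
      · have := hm.2 hlt
        linarith
      · exact hgt
    · exact hm.1
  · constructor
    · intro h
      have hne : X γ' (t+1) ≠ X γ' t := hmem (by
        intro he
        have : X γ (t+1) - X γ t = 0 := by rw [he]; ring
        linarith)
      rcases (sub_ne_zero.mpr hne).lt_or_gt with hlt | hgt
      · exact hlt
      · have := hm.1 hgt
        linarith
    · exact hm.2

theorem path_interp (hX : ∀ γ, 0 ≤ γ → IsMin n Y γ (X γ)) {γ₁ γ₂ : ℝ}
    (h1 : 0 ≤ γ₁) (hlt : γ₁ < γ₂) (hN : Nn n X γ₂ = Nn n X γ₁) :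
    ∀ γ, γ₁ ≤ γ → γ ≤ γ₂ → ∀ i, i ≤ n →
      X γ i = X γ₁ i + ((γ - γ₁)/(γ₂ - γ₁)) * (X γ₂ i - X γ₁ i) := by
  intro γ hg1 hg2 i hi
  set l := (γ - γ₁)/(γ₂ - γ₁) with hl
  have hd : 0 < γ₂ - γ₁ := by linarith
  have hl0 : 0 ≤ l := div_nonneg (by linarith) (by linarith)
  have hl1 : l ≤ 1 := by
    rw [hl, div_le_one hd]
    linarith
  have hγeq : γ = (1-l)*γ₁ + l*γ₂ := by
    rw [hl]
    field_simp
    ring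
  have hk1 : KKT n Y γ₁ (X γ₁) := isMin_kkt h1 (hX _ h1)
  have h2' : 0 ≤ γ₂ := by linarith
  have hk2 : KKT n Y γ₂ (X γ₂) := isMin_kkt h2' (hX _ h2')
  have hpat := path_pat hX h1 (le_of_lt hlt) hN
  have hkv : KKT n Y γ (fun j => (1-l) * X γ₁ j + l * X γ₂ j) :=
    interp hk1 hk2 hl0 hl1 hγeq hpat _ (fun j => rfl)
  have hγ0 : 0 ≤ γ := le_trans h1 hg1
  have h5 : (1-l) * X γ₁ i + l * X γ₂ i = X γ i :=
    min_unique hγ0 (kkt_isMin hkv) (hX γ hγ0) i hi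
  rw [← h5]
  ring

end Path

section Path2

variable {n : ℕ} {Y : ℕ → ℝ} {X : ℝ → ℕ → ℝ}

lemma cancel_aux {c d W : ℝ} (hc : c ≠ 0) (hd : d ≠ 0) :
    c * ((d / c * W) / d) = W := by
  field_simp

theorem path_cont (hX : ∀ γ, 0 ≤ γ → IsMin n Y γ (X γ)) {g₁ g₂ : ℝ}
    (hγ : 0 ≤ g₁) (hle : g₁ ≤ g₂) :
    Q n (X g₂) (X g₁) ≤ 2*(g₂ - g₁)*TV n (X g₁) := by
  have hγ2 : 0 ≤ g₂ := le_trans hγ hle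
  have hk2 : KKT n Y g₂ (X g₂) := isMin_kkt hγ2 (hX _ hγ2)
  have hs := kkt_sufficient hk2 (X g₁)
  have hm1 := hX g₁ hγ (X g₂)
  have e : ∀ w, Fo n Y g₂ w = Fo n Y g₁ w + (g₂ - g₁) * TV n w := by
    intro w
    unfold Fo
    ring
  rw [e (X g₂), e (X g₁)] at hs
  have htv2 := mul_nonneg (sub_nonneg.mpr hle) (TV_nonneg n (X g₂))
  linarith [hs, hm1, htv2]

theorem affine_formula (hX : ∀ γ, 0 ≤ γ → IsMin n Y γ (X γ)) {γ₀ γ₂ : ℝ}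
    (h0 : 0 ≤ γ₀) (hlt : γ₀ < γ₂) (hN2 : Nn n X γ₂ = Nn n X γ₀) :
    ∀ γ, γ₀ ≤ γ → Nn n X γ = Nn n X γ₀ → ∀ i, i ≤ n →
      X γ i = X γ₀ i + (γ - γ₀) * ((X γ₂ i - X γ₀ i) / (γ₂ - γ₀)) := by
  intro γ hγ0 hNγ i hi
  have hd : (0:ℝ) < γ₂ - γ₀ := by linarith
  rcases le_or_gt γ γ₂ with hle | hgt
  · have h2 := path_interp hX h0 hlt hN2 γ hγ0 hle i hi
    rw [h2]
    ring
  · have h2 := path_interp hX h0 (by linarith : γ₀ < γ) hNγ γ₂ (le_of_lt hlt)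
      (le_of_lt hgt) i hi
    have hdg : (0:ℝ) < γ - γ₀ := by linarith
    have hne2 : γ - γ₀ ≠ 0 := ne_of_gt hdg
    have hne3 : γ₂ - γ₀ ≠ 0 := ne_of_gt hd
    have h3 : (X γ₂ i - X γ₀ i) = ((γ₂ - γ₀)/(γ - γ₀)) * (X γ i - X γ₀ i) := by
      linarith [h2]
    have h5 : (X γ i - X γ₀ i) = (γ - γ₀) * ((X γ₂ i - X γ₀ i) / (γ₂ - γ₀)) := by
      rw [h3]
      exact (cancel_aux hne2 hne3).symm
    linarith [h5]

theorem endpoint_left (hX : ∀ γ, 0 ≤ γ → IsMin n Y γ (X γ)) {γ₀ γs : ℝ}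
    (h0 : 0 ≤ γ₀) (hlt : γ₀ < γs) (a b : ℕ → ℝ)
    (haff : ∀ γ, γ₀ ≤ γ → γ < γs → ∀ j, j ≤ n → X γ j = a j + γ * b j) :
    ∀ j, j ≤ n → X γs j = a j + γs * b j := by
  intro j hj
  set M : ℝ := TV n a + (|γ₀| + |γs|) * TV n b with hM
  have hM0 : 0 ≤ M :=
    add_nonneg (TV_nonneg n a) (mul_nonneg (by positivity) (TV_nonneg n b))
  have hTVb : ∀ γ, γ₀ ≤ γ → γ < γs → TV n (X γ) ≤ M := by
    intro γ hg1 hg2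
    have hγbound : |γ| ≤ |γ₀| + |γs| := by
      have h1 := neg_abs_le γ₀
      have h2 := le_abs_self γs
      have h3 := abs_nonneg γ₀
      rw [abs_le]
      constructor <;> linarith
    have e : TV n (X γ) = ∑ t ∈ range n, |(a (t+1) + γ * b (t+1)) - (a t + γ * b t)| := by
      unfold TV
      apply Finset.sum_congr rfl
      intro t ht
      rw [mem_range] at ht
      rw [haff γ hg1 (by linarith) (t+1) (by omega), haff γ hg1 (by linarith) t (by omega)]
    rw [e, hM]
    have hbd : ∀ t ∈ range n, |(a (t+1) + γ * b (t+1)) - (a t + γ * b t)|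
        ≤ |a (t+1) - a t| + (|γ₀| + |γs|) * |b (t+1) - b t| := by
      intro t _
      have h1 : (a (t+1) + γ * b (t+1)) - (a t + γ * b t)
          = (a (t+1) - a t) + γ * (b (t+1) - b t) := by ring
      rw [h1]
      calc |(a (t+1) - a t) + γ * (b (t+1) - b t)|
          ≤ |a (t+1) - a t| + |γ * (b (t+1) - b t)| := abs_add_le _ _
        _ = |a (t+1) - a t| + |γ| * |b (t+1) - b t| := by rw [abs_mul]
        _ ≤ |a (t+1) - a t| + (|γ₀| + |γs|) * |b (t+1) - b t| := by
            exact add_le_add_right (mul_le_mul_of_nonneg_right hγbound (abs_nonneg _)) _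
    calc ∑ t ∈ range n, |(a (t+1) + γ * b (t+1)) - (a t + γ * b t)|
        ≤ ∑ t ∈ range n, (|a (t+1) - a t| + (|γ₀| + |γs|) * |b (t+1) - b t|) :=
          Finset.sum_le_sum hbd
      _ = TV n a + (|γ₀| + |γs|) * TV n b := by
          unfold TV
          rw [sum_add_distrib, ← mul_sum]
  by_contra hne
  have hE0 : X γs j - (a j + γs * b j) ≠ 0 := sub_ne_zero.mpr hne
  set E : ℝ := X γs j - (a j + γs * b j) with hE
  have hEpos : 0 < |E| := abs_pos.mpr hE0
  have hEsq : 0 < E^2 := by positivity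
  set δ : ℝ := min ((γs - γ₀)/2) (min (E^2/(16*(M+1))) (|E|/(2*(|b j|+1)))) with hδ
  have hδ0 : 0 < δ := lt_min (by linarith) (lt_min (by positivity) (by positivity))
  have hδa : δ ≤ (γs - γ₀)/2 := min_le_left _ _
  have hδ2 : δ ≤ E^2/(16*(M+1)) := le_trans (min_le_right _ _) (min_le_left _ _)
  have hδ3 : δ ≤ |E|/(2*(|b j|+1)) := le_trans (min_le_right _ _) (min_le_right _ _)
  set γ : ℝ := γs - δ with hγdef
  have hγ1 : γ₀ ≤ γ := by rw [hγdef]; linarith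
  have hγ2 : γ < γs := by rw [hγdef]; linarith
  have hγnn : 0 ≤ γ := le_trans h0 hγ1
  have hq := path_cont hX hγnn (le_of_lt hγ2)
  have hsingle : (X γ j - X γs j)^2 ≤ Q n (X γs) (X γ) :=
    Finset.single_le_sum (f := fun i => (X γ i - X γs i)^2)
      (fun i _ => sq_nonneg _) (mem_range.mpr (by omega))
  have hTv := hTVb γ hγ1 hγ2
  have hgd : γs - γ = δ := by rw [hγdef]; ring
  have hQb : (X γ j - X γs j)^2 ≤ 2*δ*M := by
    have h9 : 2*(γs - γ)*TV n (X γ) ≤ 2*δ*M := by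
      rw [hgd]
      nlinarith [hTv, hδ0]
    linarith [hsingle, hq, h9]
  have hXγ : X γ j = a j + γ * b j := haff γ hγ1 hγ2 j hj
  have hid : X γ j - X γs j = -(E + δ * b j) := by
    rw [hXγ, hE, hγdef]
    ring
  rw [hid] at hQb
  have hbb : δ * |b j| ≤ |E|/2 := by
    calc δ * |b j| ≤ (|E|/(2*(|b j|+1))) * |b j| :=
          mul_le_mul_of_nonneg_right hδ3 (abs_nonneg _)
      _ ≤ |E|/2 := by
          rw [div_mul_eq_mul_div, div_le_div_iff₀ (by positivity) (by norm_num)]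
          nlinarith [abs_nonneg (b j), hEpos]
  have htri : |E|/2 ≤ |E + δ * b j| := by
    have h4 := abs_add_le (E + δ * b j) (-(δ * b j))
    have h5 : (E + δ * b j) + (-(δ * b j)) = E := by ring
    rw [h5, abs_neg, abs_mul, abs_of_pos hδ0] at h4
    linarith [hbb]
  have hfin : E^2/4 ≤ 2*δ*M := by
    have h6 : (|E|/2)^2 ≤ |E + δ * b j|^2 :=
      pow_le_pow_left₀ (by positivity) htri 2
    have h8 : E^2/4 = (|E|/2)^2 := by
      rw [div_pow, sq_abs]
      norm_num
    have h10 : (-(E + δ * b j))^2 = (E + δ * b j)^2 := by ring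
    rw [h10] at hQb
    rw [h8]
    calc (|E|/2)^2 ≤ |E + δ * b j|^2 := h6
      _ = (E + δ * b j)^2 := sq_abs _
      _ ≤ 2*δ*M := hQb
  have hd2 : δ * (16*(M+1)) ≤ E^2 := by
    rw [← le_div_iff₀ (by positivity)]
    exact hδ2
  have hexp : δ * (16*(M+1)) = 16*(δ*M) + 16*δ := by ring
  rw [hexp] at hd2
  have hδM : 0 ≤ δ*M := mul_nonneg (le_of_lt hδ0) hM0
  clear_value γ δ E M
  linarith [hfin, hd2, hδM, hδ0]

theorem inf_lt (hX : ∀ γ, 0 ≤ γ → IsMin n Y γ (X γ)) {γ₀ : ℝ} (h0 : 0 ≤ γ₀)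
    (hne : ∃ γ, γ₀ ≤ γ ∧ Nn n X γ < Nn n X γ₀) :
    γ₀ < sInf {γ | γ₀ ≤ γ ∧ Nn n X γ < Nn n X γ₀}
      ∧ Nn n X (sInf {γ | γ₀ ≤ γ ∧ Nn n X γ < Nn n X γ₀}) < Nn n X γ₀
      ∧ ∀ γ, γ₀ ≤ γ → γ < sInf {γ | γ₀ ≤ γ ∧ Nn n X γ < Nn n X γ₀} →
          Nn n X γ = Nn n X γ₀ := by
  set T := {γ | γ₀ ≤ γ ∧ Nn n X γ < Nn n X γ₀} with hT
  have hTne : T.Nonempty := hne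
  have hbdd : BddBelow T := ⟨γ₀, fun τ hτ => hτ.1⟩
  set gs := sInf T with hgs
  have hgs0 : γ₀ ≤ gs := le_csInf hTne (fun τ hτ => hτ.1)
  have hup : ∀ γ, gs < γ → γ ∈ T := by
    intro γ hγ
    obtain ⟨τ, hτT, hτlt⟩ := (csInf_lt_iff hbdd hTne).mp hγ
    exact ⟨le_trans hτT.1 (le_of_lt hτlt),
      lt_of_le_of_lt (path_N_anti hX (h0.trans hτT.1) (le_of_lt hτlt)) hτT.2⟩
  have hconst : ∀ γ, γ₀ ≤ γ → γ < gs → Nn n X γ = Nn n X γ₀ := by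
    intro γ hγ0 hγs
    have hnotT : γ ∉ T := fun hmem => absurd (csInf_le hbdd hmem) (not_le.mpr hγs)
    have h1 : Nn n X γ ≤ Nn n X γ₀ := path_N_anti hX h0 hγ0
    by_contra hne2
    exact hnotT ⟨hγ0, lt_of_le_of_ne h1 hne2⟩
  by_cases hgsT : Nn n X gs < Nn n X γ₀
  · have hlt : γ₀ < gs := lt_of_le_of_ne hgs0 (fun h => by rw [← h] at hgsT; omega)
    exact ⟨hlt, hgsT, hconst⟩
  · exfalso
    push_neg at hgsT
    have hgseq : Nn n X gs = Nn n X γ₀ :=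
      le_antisymm (path_N_anti hX h0 hgs0) hgsT
    set V := {v : ℕ | ∃ γ, gs < γ ∧ γ ≤ gs + 1 ∧ Nn n X γ = v} with hV
    have hVne : V.Nonempty := ⟨Nn n X (gs+1), gs+1, by linarith, le_refl _, rfl⟩
    have hVbdd : BddAbove V := by
      refine ⟨n, fun v hv => ?_⟩
      obtain ⟨γ, _, _, hγv⟩ := hv
      rw [← hγv, Nn]
      calc (Jf n X γ).card ≤ (range n).card :=
            Finset.card_le_card (Finset.filter_subset _ _)
        _ = n := Finset.card_range n
    obtain ⟨γ₂, hγ₂a, hγ₂b, hγ₂v⟩ := Nat.sSup_mem hVne hVbdd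
    have hmax : ∀ γ, gs < γ → γ ≤ gs + 1 → Nn n X γ ≤ Nn n X γ₂ := by
      intro γ hg hg2
      rw [hγ₂v]
      exact le_csSup hVbdd ⟨γ, hg, hg2, rfl⟩
    have hgs00 : 0 ≤ gs := le_trans h0 hgs0
    have hJconst : ∀ γ, gs < γ → γ ≤ γ₂ → Jf n X γ = Jf n X γ₂ := by
      intro γ hg hg2
      exact (Finset.eq_of_subset_of_card_le
        (path_jf_subset hX (by linarith : (0:ℝ) ≤ γ) hg2)
        (hmax γ hg (le_trans hg2 hγ₂b))).symm
    have hγ₂T : Nn n X γ₂ < Nn n X γ₀ := (hup γ₂ hγ₂a).2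
    have hsub : Jf n X γ₂ ⊆ Jf n X gs := path_jf_subset hX hgs00 (le_of_lt hγ₂a)
    have hssub : Jf n X γ₂ ⊂ Jf n X gs := by
      rw [Finset.ssubset_iff_subset_ne]
      refine ⟨hsub, fun h => ?_⟩
      have he : Nn n X γ₂ = Nn n X gs := by rw [Nn, Nn, h]
      omega
    obtain ⟨t, htgs, htγ₂⟩ := Finset.exists_of_ssubset hssub
    rw [Jf, mem_filter, mem_range] at htgs
    obtain ⟨htn, htd⟩ := htgs
    have hD0 : X gs (t+1) - X gs t ≠ 0 := sub_ne_zero.mpr htd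
    set D : ℝ := X gs (t+1) - X gs t with hD
    have hDpos : 0 < D^2 := by positivity
    set M := TV n (X gs) with hM
    have hM0 : 0 ≤ M := TV_nonneg n _
    set δ : ℝ := min (γ₂ - gs) (D^2/(16*(M+1))) with hδ
    have hδ0 : 0 < δ := lt_min (by linarith) (by positivity)
    set γ : ℝ := gs + δ with hγdef
    have hγa : gs < γ := by rw [hγdef]; linarith
    have hγb : γ ≤ γ₂ := by
      rw [hγdef]
      linarith [min_le_left (γ₂ - gs) (D^2/(16*(M+1)))]
    have hflat : X γ (t+1) = X γ t := by
      have hJ := hJconst γ hγa hγb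
      by_contra hne2
      have hmem : t ∈ Jf n X γ := by
        rw [Jf, mem_filter, mem_range]
        exact ⟨htn, hne2⟩
      rw [hJ] at hmem
      exact htγ₂ hmem
    have hq := path_cont hX hgs00 (le_of_lt hγa)
    have hp1 : (X gs (t+1) - X γ (t+1))^2 ≤ Q n (X γ) (X gs) :=
      Finset.single_le_sum (f := fun i => (X gs i - X γ i)^2)
        (fun i _ => sq_nonneg _) (mem_range.mpr (by omega))
    have hp2 : (X gs t - X γ t)^2 ≤ Q n (X γ) (X gs) :=
      Finset.single_le_sum (f := fun i => (X gs i - X γ i)^2)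
        (fun i _ => sq_nonneg _) (mem_range.mpr (by omega))
    have hDeq : D = (X gs (t+1) - X γ (t+1)) - (X gs t - X γ t) := by
      rw [hD, hflat]
      ring
    have hδle : δ ≤ D^2/(16*(M+1)) := min_le_right _ _
    have hd2 : δ * (16*(M+1)) ≤ D^2 := by
      rw [← le_div_iff₀ (by positivity)]
      exact hδle
    have hgd : γ - gs = δ := by rw [hγdef]; ring
    have hQδ : Q n (X γ) (X gs) ≤ 2*δ*M := by
      have h9 : 2*(γ - gs)*TV n (X gs) = 2*δ*M := by rw [hgd]
      linarith [hq, h9]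
    have hDsq : D^2 ≤ 2*(X gs (t+1) - X γ (t+1))^2 + 2*(X gs t - X γ t)^2 := by
      rw [hDeq]
      nlinarith [sq_nonneg ((X gs (t+1) - X γ (t+1)) + (X gs t - X γ t))]
    have hexp : δ * (16*(M+1)) = 16*(δ*M) + 16*δ := by ring
    rw [hexp] at hd2
    have hδM : 0 ≤ δ*M := mul_nonneg (le_of_lt hδ0) hM0
    clear_value γ δ M D
    linarith [hp1, hp2, hQδ, hd2, hδM, hδ0, hDsq]

end Path2

section Main

variable {n : ℕ} {Y : ℕ → ℝ} {X : ℝ → ℕ → ℝ}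

theorem tail_case (hX : ∀ γ, 0 ≤ γ → IsMin n Y γ (X γ)) {γ₀ : ℝ} (h0 : 0 ≤ γ₀)
    (hconst : ∀ γ, γ₀ ≤ γ → Nn n X γ = Nn n X γ₀) :
    ∃ a b : ℕ → ℝ, ∀ γ, γ₀ ≤ γ → ∀ j, j ≤ n → X γ j = a j + γ * b j := by
  have h1 : γ₀ < γ₀ + 1 := by linarith
  have hN2 : Nn n X (γ₀+1) = Nn n X γ₀ := hconst _ (by linarith)
  refine ⟨fun j => X γ₀ j - γ₀ * ((X (γ₀+1) j - X γ₀ j)/(γ₀+1-γ₀)),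
    fun j => (X (γ₀+1) j - X γ₀ j)/(γ₀+1-γ₀), ?_⟩
  intro γ hγ j hj
  have h2 := affine_formula hX h0 h1 hN2 γ hγ (hconst γ hγ) j hj
  rw [h2]
  ring

theorem piece_case (hX : ∀ γ, 0 ≤ γ → IsMin n Y γ (X γ)) {γ₀ γs : ℝ}
    (h0 : 0 ≤ γ₀) (hlt : γ₀ < γs)
    (hconst : ∀ γ, γ₀ ≤ γ → γ < γs → Nn n X γ = Nn n X γ₀) :
    ∃ a b : ℕ → ℝ, ∀ γ, γ₀ ≤ γ → γ ≤ γs → ∀ j, j ≤ n → X γ j = a j + γ * b j := by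
  set mid : ℝ := (γ₀ + γs)/2 with hmid
  have hm1 : γ₀ < mid := by rw [hmid]; linarith
  have hm2 : mid < γs := by rw [hmid]; linarith
  have hN2 : Nn n X mid = Nn n X γ₀ := hconst mid (le_of_lt hm1) hm2
  set b : ℕ → ℝ := fun j => (X mid j - X γ₀ j)/(mid - γ₀) with hb
  set a : ℕ → ℝ := fun j => X γ₀ j - γ₀ * b j with ha
  have haff : ∀ γ, γ₀ ≤ γ → γ < γs → ∀ j, j ≤ n → X γ j = a j + γ * b j := by
    intro γ hγ1 hγ2 j hj
    have h2 := affine_formula hX h0 hm1 hN2 γ hγ1 (hconst γ hγ1 hγ2) j hj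
    rw [h2, ha, hb]
    ring
  have hend := endpoint_left hX h0 hlt a b haff
  refine ⟨a, b, ?_⟩
  intro γ hγ1 hγ2 j hj
  rcases lt_or_eq_of_le hγ2 with h | h
  · exact haff γ hγ1 h j hj
  · rw [h]
    exact hend j hj

theorem main (hX : ∀ γ, 0 ≤ γ → IsMin n Y γ (X γ)) :
    ∀ m : ℕ, ∀ γ₀ : ℝ, 0 ≤ γ₀ → Nn n X γ₀ ≤ m →
    ∃ k : ℕ, k ≤ m ∧ ∃ c : Fin (k+1) → ℝ, c 0 = γ₀ ∧ StrictMono c ∧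
      (∀ i : Fin k, ∃ a b : ℕ → ℝ, ∀ γ ∈ Set.Icc (c i.castSucc) (c i.succ),
        ∀ j, j ≤ n → X γ j = a j + γ * b j) ∧
      (∃ a b : ℕ → ℝ, ∀ γ ∈ Set.Ici (c (Fin.last k)),
        ∀ j, j ≤ n → X γ j = a j + γ * b j) := by
  intro m
  induction m with
  | zero =>
    intro γ₀ h0 hN0
    have hconst : ∀ γ, γ₀ ≤ γ → Nn n X γ = Nn n X γ₀ := by
      intro γ hγ
      have h1 := path_N_anti hX h0 hγ
      omega
    obtain ⟨a, b, hab⟩ := tail_case hX h0 hconst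
    refine ⟨0, le_refl 0, fun _ => γ₀, rfl, ?_, fun i => i.elim0, a, b, ?_⟩
    · intro i j hij
      rw [Fin.lt_def] at hij
      have hi := i.isLt
      have hj2 := j.isLt
      omega
    · intro γ hγ j hj
      exact hab γ hγ j hj
  | succ m ih =>
    intro γ₀ h0 hN0
    by_cases hT : ∃ γ, γ₀ ≤ γ ∧ Nn n X γ < Nn n X γ₀
    · obtain ⟨hgt, hNlt, hconst⟩ := inf_lt hX h0 hT
      set gs := sInf {γ | γ₀ ≤ γ ∧ Nn n X γ < Nn n X γ₀} with hgs
      obtain ⟨a, b, hab⟩ := piece_case hX h0 hgt hconst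
      have hgs0 : 0 ≤ gs := le_trans h0 (le_of_lt hgt)
      have hNm : Nn n X gs ≤ m := by omega
      obtain ⟨k', hk', c', hc0', hmono', hpieces', htail'⟩ := ih gs hgs0 hNm
      refine ⟨k'+1, by omega, Fin.cons γ₀ c', Fin.cons_zero _ _, ?_, ?_, ?_⟩
      · rw [Fin.strictMono_iff_lt_succ]
        intro i
        refine Fin.cases ?_ ?_ i
        · rw [Fin.castSucc_zero, Fin.cons_zero, Fin.cons_succ, hc0']
          exact hgt
        · intro j
          rw [← Fin.succ_castSucc, Fin.cons_succ, Fin.cons_succ]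
          exact (Fin.strictMono_iff_lt_succ.mp hmono') j
      · intro i
        refine Fin.cases ?_ ?_ i
        · refine ⟨a, b, ?_⟩
          intro γ hγ j hj
          have h1 : (Fin.cons γ₀ c' : Fin (k'+1+1) → ℝ) (Fin.castSucc (0 : Fin (k'+1))) = γ₀ := by
            rw [Fin.castSucc_zero, Fin.cons_zero]
          have h2 : (Fin.cons γ₀ c' : Fin (k'+1+1) → ℝ) (Fin.succ (0 : Fin (k'+1))) = gs := by
            rw [Fin.cons_succ, hc0']
          rw [h1, h2] at hγ
          exact hab γ hγ.1 hγ.2 j hj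
        · intro i'
          obtain ⟨a', b', hab'⟩ := hpieces' i'
          refine ⟨a', b', ?_⟩
          intro γ hγ j hj
          have h1 : (Fin.cons γ₀ c' : Fin (k'+1+1) → ℝ) ((i'.succ).castSucc) = c' i'.castSucc := by
            rw [← Fin.succ_castSucc, Fin.cons_succ]
          have h2 : (Fin.cons γ₀ c' : Fin (k'+1+1) → ℝ) ((i'.succ).succ) = c' i'.succ :=
            Fin.cons_succ _ _ _
          rw [h1, h2] at hγ
          exact hab' γ hγ j hj
      · obtain ⟨a', b', hab'⟩ := htail'
        refine ⟨a', b', ?_⟩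
        intro γ hγ j hj
        have h1 : (Fin.cons γ₀ c' : Fin (k'+1+1) → ℝ) (Fin.last (k'+1)) = c' (Fin.last k') := by
          rw [← Fin.succ_last, Fin.cons_succ]
        rw [h1] at hγ
        exact hab' γ hγ j hj
    · push_neg at hT
      have hconst : ∀ γ, γ₀ ≤ γ → Nn n X γ = Nn n X γ₀ := fun γ hγ =>
        le_antisymm (path_N_anti hX h0 hγ) (hT γ hγ)
      obtain ⟨a, b, hab⟩ := tail_case hX h0 hconst
      refine ⟨0, by omega, fun _ => γ₀, rfl, ?_, fun i => i.elim0, a, b, ?_⟩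
      · intro i j hij
        rw [Fin.lt_def] at hij
        have hi := i.isLt
        have hj2 := j.isLt
        omega
      · intro γ hγ j hj
        exact hab γ hγ j hj

end Main

end FL

/-- The solution path of the unweighted 1-D fused lasso with input of size `n+1` has
at most `n+1` distinct linear segments. -/
theorem fused_lasso_linear_segments (n : ℕ) (y : Fin (n + 1) → ℝ)
    (x : ℝ → Fin (n + 1) → ℝ)
    (hx : ∀ γ, 0 ≤ γ → ∀ v, fusedObj1 n y γ (x γ) ≤ fusedObj1 n y γ v) :
    ∃ (k : ℕ) (c : Fin (k + 1) → ℝ),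
      k + 1 ≤ n + 1 ∧
      c 0 = 0 ∧ StrictMono c ∧
      (∀ i : Fin k, ∃ a b : Fin (n + 1) → ℝ,
        ∀ γ ∈ Set.Icc (c i.castSucc) (c i.succ), ∀ t, x γ t = a t + γ * b t) ∧
      (∃ a b : Fin (n + 1) → ℝ,
        ∀ γ ∈ Set.Ici (c (Fin.last k)), ∀ t, x γ t = a t + γ * b t) := by
  classical
  have hXmin : ∀ γ, 0 ≤ γ → FL.IsMin n (FL.toS n y) γ (FL.toS n (x γ)) := by
    intro γ hγ v
    have e1 : FL.Fo n (FL.toS n y) γ (FL.toS n (x γ)) = fusedObj1 n y γ (x γ) :=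
      (FL.fused_eq y (x γ) γ).symm
    have e2 : FL.Fo n (FL.toS n y) γ v
        = fusedObj1 n y γ (fun t : Fin (n+1) => v t.val) := by
      rw [FL.fused_eq]
      exact FL.Fo_congr γ (fun i hi => rfl)
        (fun i hi => (FL.toS_val (fun t : Fin (n+1) => v t.val) i (by omega)).symm)
    rw [e1, e2]
    exact hx γ hγ _
  have hN0 : FL.Nn n (fun γ => FL.toS n (x γ)) 0 ≤ n := by
    rw [FL.Nn]
    calc (FL.Jf n (fun γ => FL.toS n (x γ)) 0).card ≤ (Finset.range n).card :=
          Finset.card_le_card (Finset.filter_subset _ _)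
      _ = n := Finset.card_range n
  obtain ⟨k, hk, c, hc0, hmono, hpieces, htail⟩ :=
    FL.main hXmin n 0 (le_refl (0:ℝ)) hN0
  refine ⟨k, c, by omega, hc0, hmono, ?_, ?_⟩
  · intro i
    obtain ⟨a, b, hab⟩ := hpieces i
    refine ⟨fun t => a t.val, fun t => b t.val, ?_⟩
    intro γ hγ t
    have h3 : FL.toS n (x γ) t.val = a t.val + γ * b t.val := hab γ hγ t.val (by omega)
    rw [FL.toS_fin (x γ) t] at h3
    exact h3
  · obtain ⟨a, b, hab⟩ := htail
    refine ⟨fun t => a t.val, fun t => b t.val, ?_⟩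
    intro γ hγ t
    have h3 : FL.toS n (x γ) t.val = a t.val + γ * b t.val := hab γ hγ t.val (by omega)
    rw [FL.toS_fin (x γ) t] at h3
    exact h3
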